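/- Let r be a positive natural number, let w ∈ ℝ^r with w ≠ 0, and let p₁, p₂ > 0. Define f : ℝ^r → ℝ by f(v) = p₁ · log(1 + exp(−⟨v, w⟩)) + p₂ · log(1 + exp(⟨v, w⟩)), where ⟨·,·⟩ is the Euclidean inner product. If v̂ ∈ ℝ^r is a critical point of f (i.e., the Fréchet derivative of f at v̂ is zero; in particular if v̂ minimizes f), then log(p₁/p₂) = ⟨v̂, w⟩. -/

import Mathlib

open scoped RealInnerProductSpace

theorem stmt_2 (r : ℕ) (hr : 0 < r)
    (w : EuclideanSpace ℝ (Fin r)) (hw : w ≠ 0)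
    (p₁ p₂ : ℝ) (hp₁ : 0 < p₁) (hp₂ : 0 < p₂)
    (f : EuclideanSpace ℝ (Fin r) → ℝ)
    (hf : f = fun v => p₁ * Real.log (1 + Real.exp (-⟪v, w⟫)) +
                       p₂ * Real.log (1 + Real.exp (⟪v, w⟫)))
    (vhat : EuclideanSpace ℝ (Fin r))
    (hcrit : fderiv ℝ f vhat = 0) :
    Real.log (p₁ / p₂) = ⟪vhat, w⟫ := by
  set t : ℝ := ⟪vhat, w⟫ with ht
  have hpos1 : (0:ℝ) < 1 + Real.exp (-t) := by positivity
  have hpos2 : (0:ℝ) < 1 + Real.exp t := by positivity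
  set G : ℝ := p₁ * (-Real.exp (-t) / (1 + Real.exp (-t))) +
      p₂ * (Real.exp t / (1 + Real.exp t)) with hG
  have hg : HasDerivAt (fun s : ℝ => p₁ * Real.log (1 + Real.exp (-s)) +
      p₂ * Real.log (1 + Real.exp s)) G t := by
    have h1 : HasDerivAt (fun s : ℝ => 1 + Real.exp (-s)) (Real.exp (-t) * (-1)) t :=
      ((Real.hasDerivAt_exp (-t)).comp t ((hasDerivAt_id t).neg)).const_add 1
    have h2 : HasDerivAt (fun s : ℝ => 1 + Real.exp s) (Real.exp t) t :=
      (Real.hasDerivAt_exp t).const_add 1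
    have hl1 := (h1.log (ne_of_gt hpos1)).const_mul p₁
    have hl2 := (h2.log (ne_of_gt hpos2)).const_mul p₂
    have := hl1.add hl2
    refine HasDerivAt.congr_deriv this ?_
    rw [hG]; ring
  set L : EuclideanSpace ℝ (Fin r) →L[ℝ] ℝ := innerSL ℝ w with hL
  have hLv : ∀ v : EuclideanSpace ℝ (Fin r), L v = ⟪v, w⟫ := fun v => (real_inner_comm w v).symm
  have hF : HasFDerivAt f (G • L) vhat := by
    have hgt : HasDerivAt (fun s : ℝ => p₁ * Real.log (1 + Real.exp (-s)) +
        p₂ * Real.log (1 + Real.exp s)) G (L vhat) := by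
      rw [hLv vhat]; exact hg
    have hcomp := hgt.comp_hasFDerivAt vhat L.hasFDerivAt
    have hfg : f = (fun s : ℝ => p₁ * Real.log (1 + Real.exp (-s)) +
        p₂ * Real.log (1 + Real.exp s)) ∘ (fun v => L v) := by
      funext v
      simp only [hf, Function.comp, hLv v]
    rw [hfg]
    exact hcomp
  have hzero : (G • L) = 0 := by rw [← hF.fderiv, hcrit]
  have hGw : G * ⟪w, w⟫ = 0 := by
    have := congrFun (congrArg DFunLike.coe hzero) w
    simpa [hLv w] using this
  have hww : ⟪w, w⟫ ≠ (0:ℝ) := by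
    simpa using (inner_self_ne_zero (𝕜 := ℝ)).mpr hw
  have hG0 : G = 0 := by
    rcases mul_eq_zero.mp hGw with h | h
    · exact h
    · exact absurd h hww
  have hkey : p₁ = p₂ * Real.exp t := by
    have h := hG0
    rw [hG] at h
    rw [Real.exp_neg] at h
    have hE : (0:ℝ) < Real.exp t := Real.exp_pos t
    rw [Real.exp_neg] at hpos1
    field_simp at h
    have h2 : (p₂ * Real.exp t - p₁) * (1 + Real.exp t) = 0 := by linear_combination h
    rcases mul_eq_zero.mp h2 with h3 | h3
    · linarith
    · linarith
  have : p₁ / p₂ = Real.exp t := by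
    field_simp [hkey]
    exact hkey
  rw [this, Real.log_exp]
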